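/- Let (Y, d) be a compact metric space, Θ ⊆ ℝ^k open, and θ₀ ∈ Θ. Let w : Θ × Y → ℝ be such that w(θ,·) is continuous on Y for each θ ∈ Θ, and suppose there is ẇ : Y × ℝ^k → ℝ with ẇ(·,h) continuous on Y for each h, satisfying the uniform directional-differentiability condition: for every h ∈ ℝ^k and all sequences t_n ↓ 0 and h_n → h with θ₀ + t_n h_n ∈ Θ for all n, sup_{y∈Y} | ( w(θ₀ + t_n h_n, y) − w(θ₀, y) ) / t_n − ẇ(y, h) | → 0. Let S be a nonempty closed set of Borel probability measures on Y (in the topology of weak convergence), define W_S*(θ) := sup_{μ∈S} ∫_Y w(θ, y) dμ(y), and for ε > 0 define S^ε(θ₀) := { μ ∈ S : ∫ w(θ₀, y) dμ + ε ≥ W_S*(θ₀) }. Then for every h ∈ ℝ^k, the limit D(h) := lim_{ε↓0} sup_{μ ∈ S^ε(θ₀)} ∫_Y ẇ(y, h) dμ(y) exists, and W_S* is Hadamard directionally differentiable at θ₀ with directional derivative D: for all sequences t_n ↓ 0 and h_n → h with θ₀ + t_n h_n ∈ Θ, ( W_S*(θ₀ + t_n h_n) − W_S*(θ₀) ) / t_n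 → D(h). -/

import Mathlib

open MeasureTheory Set Filter

noncomputable def valueSup {Y : Type*} [MeasurableSpace Y]
    (S : Set (ProbabilityMeasure Y)) (f : Y → ℝ) : ℝ :=
  sSup ((fun μ : ProbabilityMeasure Y => ∫ y, f y ∂(μ : Measure Y)) '' S)

section aux
variable {Y : Type*} [MetricSpace Y] [CompactSpace Y] [Nonempty Y]
    [MeasurableSpace Y] [BorelSpace Y]

set_option linter.unusedSectionVars false

lemma VF.integ {f : Y → ℝ} (hf : Continuous f) (μ : ProbabilityMeasure Y) :
    Integrable f (μ : Measure Y) :=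
  (BoundedContinuousFunction.mkOfCompact ⟨f, hf⟩).integrable _

lemma VF.exists_bound {f : Y → ℝ} (hf : Continuous f) :
    ∃ C : ℝ, 0 ≤ C ∧ ∀ y, |f y| ≤ C := by
  refine ⟨‖BoundedContinuousFunction.mkOfCompact ⟨f, hf⟩‖, norm_nonneg _, fun y => ?_⟩
  simpa using BoundedContinuousFunction.norm_coe_le_norm
    (BoundedContinuousFunction.mkOfCompact ⟨f, hf⟩) y

lemma VF.abs_integral_le {f : Y → ℝ} {C : ℝ}
    (hC : ∀ y, |f y| ≤ C) (μ : ProbabilityMeasure Y) :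
    |∫ y, f y ∂(μ : Measure Y)| ≤ C := by
  have h := norm_integral_le_of_norm_le_const (μ := (μ : Measure Y)) (f := f) (C := C)
    (Eventually.of_forall fun y => by simpa using hC y)
  simpa [Real.norm_eq_abs] using h

lemma VF.bddAbove {f : Y → ℝ} (hf : Continuous f) (S' : Set (ProbabilityMeasure Y)) :
    BddAbove ((fun μ : ProbabilityMeasure Y => ∫ y, f y ∂(μ : Measure Y)) '' S') := by
  obtain ⟨C, -, hC⟩ := VF.exists_bound hf
  exact ⟨C, fun x hx => by
    obtain ⟨μ, -, rfl⟩ := hx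
    exact (abs_le.mp (VF.abs_integral_le hC μ)).2⟩

lemma VF.le_valueSup {f : Y → ℝ} (hf : Continuous f) {S' : Set (ProbabilityMeasure Y)}
    {μ : ProbabilityMeasure Y} (hμ : μ ∈ S') :
    ∫ y, f y ∂(μ : Measure Y) ≤ valueSup S' f :=
  le_csSup (VF.bddAbove hf S') ⟨μ, hμ, rfl⟩

lemma VF.exists_near {f : Y → ℝ} {S' : Set (ProbabilityMeasure Y)}
    (hne : S'.Nonempty) {δ : ℝ} (hδ : 0 < δ) :
    ∃ μ ∈ S', valueSup S' f - δ < ∫ y, f y ∂(μ : Measure Y) := by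
  obtain ⟨x, hx, hlt⟩ := exists_lt_of_lt_csSup (hne.image _)
    (sub_lt_self (valueSup S' f) hδ)
  obtain ⟨μ, hμ, rfl⟩ := hx
  exact ⟨μ, hμ, hlt⟩

end aux

theorem value_function_hadamard_directional_derivative
    {Y : Type*} [MetricSpace Y] [CompactSpace Y] [Nonempty Y]
    [MeasurableSpace Y] [BorelSpace Y] {k : ℕ}
    (Θ : Set (Fin k → ℝ)) (hΘ : IsOpen Θ) (θ₀ : Fin k → ℝ) (hθ₀ : θ₀ ∈ Θ)
    (w : (Fin k → ℝ) → Y → ℝ) (hw : ∀ θ ∈ Θ, Continuous (w θ))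
    (wd : Y → (Fin k → ℝ) → ℝ) (hwd : ∀ h : Fin k → ℝ, Continuous fun y => wd y h)
    (hunif : ∀ (h : Fin k → ℝ) (t : ℕ → ℝ) (hs : ℕ → Fin k → ℝ),
      (∀ n, 0 < t n) → Filter.Tendsto t Filter.atTop (nhds 0) →
      Filter.Tendsto hs Filter.atTop (nhds h) →
      (∀ n, θ₀ + t n • hs n ∈ Θ) →
      Filter.Tendsto
        (fun n => ⨆ y : Y, |(w (θ₀ + t n • hs n) y - w θ₀ y) / t n - wd y h|)
        Filter.atTop (nhds 0))
    (S : Set (ProbabilityMeasure Y)) (hSne : S.Nonempty) (hScl : IsClosed S) :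
    ∃ D : (Fin k → ℝ) → ℝ,
      (∀ h : Fin k → ℝ,
        Filter.Tendsto
          (fun ε : ℝ => valueSup
            {μ ∈ S | valueSup S (w θ₀) ≤ ∫ y, w θ₀ y ∂(μ : Measure Y) + ε}
            (fun y => wd y h))
          (nhdsWithin 0 (Set.Ioi 0)) (nhds (D h))) ∧
      (∀ (h : Fin k → ℝ) (t : ℕ → ℝ) (hs : ℕ → Fin k → ℝ),
        (∀ n, 0 < t n) → Filter.Tendsto t Filter.atTop (nhds 0) →
        Filter.Tendsto hs Filter.atTop (nhds h) →
        (∀ n, θ₀ + t n • hs n ∈ Θ) →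
        Filter.Tendsto
          (fun n => (valueSup S (w (θ₀ + t n • hs n)) - valueSup S (w θ₀)) / t n)
          Filter.atTop (nhds (D h))) := by
  classical
  have hcw0 : Continuous (w θ₀) := hw θ₀ hθ₀
  -- the ε-argmax sets
  set Sε : ℝ → Set (ProbabilityMeasure Y) := fun ε =>
    {μ ∈ S | valueSup S (w θ₀) ≤ ∫ y, w θ₀ y ∂(μ : Measure Y) + ε} with hSε
  -- the ε-sup function
  set g : (Fin k → ℝ) → ℝ → ℝ := fun h ε => valueSup (Sε ε) (fun y => wd y h) with hg
  -- uniform bound on wd · h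
  have hM : ∀ h : Fin k → ℝ, ∃ C : ℝ, 0 ≤ C ∧ ∀ y, |wd y h| ≤ C := fun h =>
    VF.exists_bound (hwd h)
  choose M hM0 hMb using hM
  -- nonemptiness of the ε-argmax sets
  have hSεne : ∀ ε : ℝ, 0 < ε → (Sε ε).Nonempty := by
    intro ε hε
    obtain ⟨μ, hμ, hlt⟩ := VF.exists_near (f := w θ₀) hSne hε
    exact ⟨μ, hμ, by linarith⟩
  -- monotonicity of g h on (0, ∞)
  have hgm : ∀ h, MonotoneOn (g h) (Ioi 0) := by
    intro h ε hε ε' _ hle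
    refine csSup_le_csSup (VF.bddAbove (hwd h) _) ((hSεne ε hε).image _) ?_
    refine Set.image_mono fun μ hμ => ⟨hμ.1, hμ.2.trans (by linarith)⟩
  -- lower bound for g h
  have hglb : ∀ h, ∀ ε : ℝ, 0 < ε → -M h ≤ g h ε := by
    intro h ε hε
    obtain ⟨μ, hμ⟩ := hSεne ε hε
    have h1 := (abs_le.mp (VF.abs_integral_le (hMb h) μ)).1
    exact h1.trans (VF.le_valueSup (hwd h) hμ)
  -- upper bound for g h
  have hgub : ∀ h, ∀ ε : ℝ, 0 < ε → g h ε ≤ M h := by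
    intro h ε hε
    refine csSup_le ((hSεne ε hε).image _) ?_
    rintro x ⟨μ, -, rfl⟩
    exact (abs_le.mp (VF.abs_integral_le (hMb h) μ)).2
  -- the candidate derivative
  set D : (Fin k → ℝ) → ℝ := fun h => sInf (g h '' Ioi 0) with hD
  -- Part 1: the ε ↓ 0 limit exists and equals D h
  have hpart1 : ∀ h, Tendsto (g h) (nhdsWithin 0 (Set.Ioi 0)) (nhds (D h)) := by
    intro h
    refine (hgm h).tendsto_nhdsGT ⟨-M h, ?_⟩
    rintro x ⟨ε, hε, rfl⟩
    exact hglb h ε hε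
  refine ⟨D, fun h => hpart1 h, ?_⟩
  -- Part 2
  intro h t hs ht0 htl hhl hmem
  set θn : ℕ → Fin k → ℝ := fun n => θ₀ + t n • hs n with hθn
  have hcw : ∀ n, Continuous (w (θn n)) := fun n => hw _ (hmem n)
  set e : ℕ → ℝ := fun n => ⨆ y : Y, |(w (θn n) y - w θ₀ y) / t n - wd y h| with he'
  have he : Tendsto e atTop (nhds 0) := hunif h t hs ht0 htl hhl hmem
  -- pointwise bound by e n
  have hpt0 : ∀ n y, |(w (θn n) y - w θ₀ y) / t n - wd y h| ≤ e n := by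
    intro n y
    have hc : Continuous fun y => |(w (θn n) y - w θ₀ y) / t n - wd y h| :=
      ((((hcw n).sub hcw0).div_const _).sub (hwd h)).abs
    exact le_ciSup (isCompact_range hc).bddAbove y
  have he0 : ∀ n, 0 ≤ e n := fun n =>
    (abs_nonneg _).trans (hpt0 n (Classical.arbitrary Y))
  have hpt : ∀ n y, |w (θn n) y - w θ₀ y - t n * wd y h| ≤ t n * e n := by
    intro n y
    have ht := (ht0 n).ne'
    have : w (θn n) y - w θ₀ y - t n * wd y h
        = t n * ((w (θn n) y - w θ₀ y) / t n - wd y h) := by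
      field_simp
    rw [this, abs_mul, abs_of_pos (ht0 n)]
    exact mul_le_mul_of_nonneg_left (hpt0 n y) (ht0 n).le
  -- integral comparison
  have hkey : ∀ n (μ : ProbabilityMeasure Y),
      |(∫ y, w (θn n) y ∂(μ : Measure Y)) - (∫ y, w θ₀ y ∂(μ : Measure Y))
        - t n * ∫ y, wd y h ∂(μ : Measure Y)| ≤ t n * e n := by
    intro n μ
    have i1 := VF.integ (hcw n) μ
    have i2 := VF.integ hcw0 μ
    have i3 := VF.integ (hwd h) μ
    have heq : (∫ y, w (θn n) y ∂(μ : Measure Y)) - (∫ y, w θ₀ y ∂(μ : Measure Y))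
        - t n * ∫ y, wd y h ∂(μ : Measure Y)
        = ∫ y, (w (θn n) y - w θ₀ y - t n * wd y h) ∂(μ : Measure Y) := by
      rw [integral_sub (show Integrable (fun y => w (θn n) y - w θ₀ y) (μ : Measure Y) from VF.integ ((hcw n).sub hcw0) μ) (i3.const_mul _),
        integral_sub i1 i2, integral_const_mul]
    rw [heq]
    exact VF.abs_integral_le (hpt n) μ
  -- lower bound
  have hL : ∀ n, g h (t n * t n) - 2 * t n - e n ≤ (valueSup S (w (θn n)) - valueSup S (w θ₀)) / t n := by
    intro n
    have htt : (0:ℝ) < t n * t n := mul_pos (ht0 n) (ht0 n)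
    obtain ⟨μ, hμ, hnear⟩ := VF.exists_near (f := fun y => wd y h) (hSεne _ htt) (ht0 n)
    have c1 : ∫ y, w (θn n) y ∂(μ : Measure Y) ≤ valueSup S (w (θn n)) :=
      VF.le_valueSup (hcw n) hμ.1
    have c2 := (abs_le.mp (hkey n μ)).1
    have c3 : valueSup S (w θ₀) ≤ (∫ y, w θ₀ y ∂(μ : Measure Y)) + t n * t n := hμ.2
    have c4 : t n * (g h (t n * t n) - t n) ≤ t n * (∫ y, wd y h ∂(μ : Measure Y)) :=
      mul_le_mul_of_nonneg_left hnear.le (ht0 n).le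
    rw [le_div_iff₀ (ht0 n)]
    nlinarith [c1, c2, c3, c4]
  -- the auxiliary ε' sequence
  set ε' : ℕ → ℝ := fun n => t n * (3 * t n + 2 * M h + 2 * e n + 1) with hε'
  have hε'pos : ∀ n, 0 < ε' n := by
    intro n
    have := ht0 n; have := hM0 h; have := he0 n
    have : 0 < 3 * t n + 2 * M h + 2 * e n + 1 := by linarith
    exact mul_pos (ht0 n) this
  -- upper bound
  have hU : ∀ n, (valueSup S (w (θn n)) - valueSup S (w θ₀)) / t n ≤ g h (ε' n) + e n + t n := by
    intro n
    have htt : (0:ℝ) < t n * t n := mul_pos (ht0 n) (ht0 n)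
    obtain ⟨ν, hν, hnear⟩ := VF.exists_near (f := w (θn n)) hSne htt
    have d1 : ∫ y, w θ₀ y ∂(ν : Measure Y) ≤ valueSup S (w θ₀) := VF.le_valueSup hcw0 hν
    have d2 := abs_le.mp (hkey n ν)
    have d3 : (g h (t n * t n) - 2 * t n - e n) * t n ≤ valueSup S (w (θn n)) - valueSup S (w θ₀) :=
      (le_div_iff₀ (ht0 n)).mp (hL n)
    have d4 : -M h ≤ g h (t n * t n) := hglb h _ htt
    have d5 : (∫ y, wd y h ∂(ν : Measure Y)) ≤ M h := (abs_le.mp (VF.abs_integral_le (hMb h) ν)).2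
    have d5' : -M h ≤ (∫ y, wd y h ∂(ν : Measure Y)) := (abs_le.mp (VF.abs_integral_le (hMb h) ν)).1
    -- ν is in the ε' n argmax set
    have hmemν : ν ∈ Sε (ε' n) := by
      have p1 : t n * (∫ y, wd y h ∂(ν : Measure Y)) ≤ t n * M h := mul_le_mul_of_nonneg_left d5 (ht0 n).le
      have p2 : t n * (-M h) ≤ t n * g h (t n * t n) :=
        mul_le_mul_of_nonneg_left d4 (ht0 n).le
      have p3 : 0 ≤ t n * e n := mul_nonneg (ht0 n).le (he0 n)
      refine ⟨hν, ?_⟩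
      simp only [hε']
      nlinarith [d1, d2.1, d2.2, d3, hnear, p1, p2, p3, ht0 n]
    have d6 : (∫ y, wd y h ∂(ν : Measure Y)) ≤ g h (ε' n) := VF.le_valueSup (hwd h) hmemν
    rw [div_le_iff₀ (ht0 n)]
    have p4 : t n * (∫ y, wd y h ∂(ν : Measure Y)) ≤ t n * g h (ε' n) := mul_le_mul_of_nonneg_left d6 (ht0 n).le
    nlinarith [d1, d2.2, hnear, p4]
  -- limits of the bounding sequences
  have htt_lim : Tendsto (fun n => t n * t n) atTop (nhdsWithin 0 (Set.Ioi 0)) := by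
    rw [tendsto_nhdsWithin_iff]
    constructor
    · simpa using htl.mul htl
    · exact Eventually.of_forall fun n => mul_pos (ht0 n) (ht0 n)
  have hε'_lim : Tendsto ε' atTop (nhdsWithin 0 (Set.Ioi 0)) := by
    rw [tendsto_nhdsWithin_iff]
    constructor
    · have h1 : Tendsto (fun n => 3 * t n + 2 * M h + 2 * e n + 1) atTop
          (nhds (3 * 0 + 2 * M h + 2 * 0 + 1)) := by
        exact (((htl.const_mul 3).add tendsto_const_nhds).add (he.const_mul 2)).add
          tendsto_const_nhds
      have := htl.mul h1
      simpa using this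
    · exact Eventually.of_forall hε'pos
  have hgl1 : Tendsto (fun n => g h (t n * t n)) atTop (nhds (D h)) :=
    (hpart1 h).comp htt_lim
  have hgl2 : Tendsto (fun n => g h (ε' n)) atTop (nhds (D h)) :=
    (hpart1 h).comp hε'_lim
  have hLlim : Tendsto (fun n => g h (t n * t n) - 2 * t n - e n) atTop (nhds (D h)) := by
    have := (hgl1.sub (htl.const_mul 2)).sub he
    simpa using this
  have hUlim : Tendsto (fun n => g h (ε' n) + e n + t n) atTop (nhds (D h)) := by
    have := (hgl2.add he).add htl
    simpa using this
  exact tendsto_of_tendsto_of_tendsto_of_le_of_le hLlim hUlim hL hU
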